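/- If a finite connected multigraph Γ' is obtained from a finite connected multigraph Γ by contracting a single edge e, then v₁(Γ') + b₁(Γ') ≤ v₁(Γ) + b₁(Γ), where v₁ denotes the number of vertices of degree 1 and b₁ denotes the first Betti number (number of edges minus number of vertices plus 1). -/

import Mathlib

/-- A finite multigraph: finite vertex and edge types, with each edge assigned
its unordered pair of endpoints (loops and multiple edges allowed). -/
structure Multigraph where
  V : Type
  E : Type
  fintypeV : Fintype V
  fintypeE : Fintype E
  ends : E → Sym2 V

attribute [instance] Multigraph.fintypeV Multigraph.fintypeE

namespace Multigraph

open Classical in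
/-- The degree (valence) of a vertex: loops count twice. -/
noncomputable def deg (G : Multigraph) (v : G.V) : ℕ :=
  ∑ e : G.E, (if v ∈ G.ends e then (if G.ends e = s(v, v) then 2 else 1) else 0)

/-- The number of 1-valent vertices. -/
noncomputable def v₁ (G : Multigraph) : ℕ := Nat.card {v : G.V // G.deg v = 1}

/-- The first Betti number `|E| - |V| + 1` (as an integer). -/
noncomputable def b₁ (G : Multigraph) : ℤ :=
  (Nat.card G.E : ℤ) - (Nat.card G.V : ℤ) + 1

/-- Adjacency through some edge. -/
def Adj (G : Multigraph) (u v : G.V) : Prop := ∃ e : G.E, G.ends e = s(u, v)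

/-- Connectedness of a multigraph. -/
def Connected (G : Multigraph) : Prop :=
  Nonempty G.V ∧ ∀ u v : G.V, Relation.ReflTransGen G.Adj u v

/-- Contraction of the edge `e`: the endpoints of `e` get identified and `e`
is removed (for a loop, this just deletes the loop). -/
noncomputable def contract (G : Multigraph) (e : G.E) : Multigraph where
  V := Quot (fun a b => G.ends e = s(a, b))
  E := {e' : G.E // e' ≠ e}
  fintypeV := by
    classical exact Fintype.ofSurjective (Quot.mk _) (fun q => Quot.exists_rep q)
  fintypeE := by classical exact inferInstance
  ends := fun e' => Sym2.map (Quot.mk _) (G.ends e'.1)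

end Multigraph

namespace MultigraphAux

open Multigraph

open Classical in
/-- The contribution of an edge with endpoints `z` to the degree of `x`. -/
noncomputable def t {V : Type} (x : V) (z : Sym2 V) : ℕ :=
  if x ∈ z then (if z = s(x, x) then 2 else 1) else 0

lemma deg_eq_sum_t (G : Multigraph) (v : G.V) : G.deg v = ∑ e : G.E, t v (G.ends e) := rfl

variable {G : Multigraph} {e : G.E}

lemma mk_eq_mk {u w : G.V} (he : G.ends e = s(u, w)) (a b : G.V) :
    Quot.mk (fun a b => G.ends e = s(a, b)) a = Quot.mk (fun a b => G.ends e = s(a, b)) b ↔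
      a = b ∨ (a = u ∧ b = w) ∨ (a = w ∧ b = u) := by
  rw [Quot.eq]
  constructor
  · intro h
    induction h with
    | rel x y h => rw [he, Sym2.eq_iff] at h; tauto
    | refl x => tauto
    | symm x y _ ih => tauto
    | trans x y z _ _ ih1 ih2 =>
      rcases ih1 with h1 | ⟨h1, h1'⟩ | ⟨h1, h1'⟩ <;>
        rcases ih2 with h2 | ⟨h2, h2'⟩ | ⟨h2, h2'⟩ <;> subst_vars <;> tauto
  · rintro (rfl | ⟨rfl, rfl⟩ | ⟨rfl, rfl⟩)
    · exact Relation.EqvGen.refl _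
    · exact Relation.EqvGen.rel _ _ he
    · exact Relation.EqvGen.symm _ _ (Relation.EqvGen.rel _ _ he)

/-- If `x` is not merged with anything else, the degree contribution of each
surviving edge is unchanged. -/
lemma t_map_eq (x : G.V)
    (hx : ∀ a : G.V, Quot.mk (fun a b => G.ends e = s(a, b)) x =
        Quot.mk (fun a b => G.ends e = s(a, b)) a ↔ x = a)
    (z : Sym2 G.V) :
    t (Quot.mk (fun a b => G.ends e = s(a, b)) x)
      (Sym2.map (Quot.mk (fun a b => G.ends e = s(a, b))) z) = t x z := by
  classical
  induction z using Sym2.ind with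
  | _ a b =>
    have h1 : Quot.mk (fun a b => G.ends e = s(a, b)) a =
        Quot.mk (fun a b => G.ends e = s(a, b)) x ↔ a = x := by
      rw [eq_comm, hx a, eq_comm]
    have h2 : Quot.mk (fun a b => G.ends e = s(a, b)) b =
        Quot.mk (fun a b => G.ends e = s(a, b)) x ↔ b = x := by
      rw [eq_comm, hx b, eq_comm]
    simp only [t, Sym2.map_pair_eq, Sym2.mem_iff, Sym2.eq_iff, hx, h1, h2]

/-- The degree contribution at the merged vertex is the sum of the contributions
at the two old vertices. -/
lemma t_map_merge {u w : G.V} (he : G.ends e = s(u, w)) (huw : u ≠ w) (z : Sym2 G.V) :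
    t (Quot.mk (fun a b => G.ends e = s(a, b)) u)
      (Sym2.map (Quot.mk (fun a b => G.ends e = s(a, b))) z) = t u z + t w z := by
  classical
  induction z using Sym2.ind with
  | _ a b =>
    have key : ∀ c d : G.V, Quot.mk (fun a b => G.ends e = s(a, b)) c =
        Quot.mk (fun a b => G.ends e = s(a, b)) d ↔
        c = d ∨ (c = u ∧ d = w) ∨ (c = w ∧ d = u) := mk_eq_mk he
    simp only [t, Sym2.map_pair_eq, Sym2.mem_iff, Sym2.eq_iff, key]
    by_cases hau : a = u <;> by_cases haw : a = w <;> by_cases hbu : b = u <;>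
      by_cases hbw : b = w <;> subst_vars <;> simp_all <;> tauto

/-- Degree in the contraction, as a sum over the surviving edges. -/
lemma deg_contract [DecidableEq G.E] (x : G.V) :
    (G.contract e).deg (Quot.mk (fun a b => G.ends e = s(a, b)) x) =
      ∑ e' ∈ Finset.univ.erase e,
        t (Quot.mk (fun a b => G.ends e = s(a, b)) x)
          (Sym2.map (Quot.mk (fun a b => G.ends e = s(a, b))) (G.ends e')) := by
  classical
  refine (deg_eq_sum_t (G.contract e) _).trans ?_
  rw [Finset.sum_subtype (Finset.univ.erase e) (p := fun e' => e' ≠ e) (fun x => by simp)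
      (fun e' => t (Quot.mk (fun a b => G.ends e = s(a, b)) x)
        (Sym2.map (Quot.mk (fun a b => G.ends e = s(a, b))) (G.ends e')))]
  rfl

lemma t_ends_self {u w : G.V} (he : G.ends e = s(u, w)) (huw : u ≠ w) :
    t u (G.ends e) = 1 := by
  classical
  simp [t, he, Sym2.mem_iff, Sym2.eq_iff, huw, huw.symm]

lemma t_ends_other {u w x : G.V} (he : G.ends e = s(u, w)) (hxu : x ≠ u) (hxw : x ≠ w) :
    t x (G.ends e) = 0 := by
  classical
  simp [t, he, Sym2.mem_iff, hxu, hxw]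

end MultigraphAux

open MultigraphAux in
/-- Contracting a single edge of a finite connected multigraph does not
increase `v₁ + b₁`. -/
theorem v1_add_b1_contract_le (G : Multigraph) (hG : G.Connected) (e : G.E) :
    ((G.contract e).v₁ : ℤ) + (G.contract e).b₁ ≤ (G.v₁ : ℤ) + G.b₁ := by
  classical
  obtain ⟨u, w, he⟩ : ∃ u w, G.ends e = s(u, w) :=
    Sym2.ind (fun u w => ⟨u, w, rfl⟩) (G.ends e)
  set R : G.V → G.V → Prop := fun a b => G.ends e = s(a, b) with hR
  set q : G.V → Quot R := Quot.mk R with hq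
  -- cardinality of edges
  have hE : (Nat.card (G.contract e).E : ℤ) = (Nat.card G.E : ℤ) - 1 := by
    have h1 : Nat.card (G.contract e).E = Fintype.card {e' : G.E // e' ≠ e} :=
      Nat.card_eq_fintype_card
    have h2 : Fintype.card {e' : G.E // e' ≠ e} = Fintype.card G.E - 1 := by
      rw [Fintype.card_subtype]
      rw [Finset.filter_ne']
      exact Finset.card_erase_of_mem (Finset.mem_univ e)
    have h3 : 1 ≤ Fintype.card G.E := Fintype.card_pos_iff.mpr ⟨e⟩
    rw [h1, h2, Nat.card_eq_fintype_card]
    push_cast [h3]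
    ring
  have hsurj : Function.Surjective q := Quot.exists_rep
  by_cases huw : u = w
  · -- loop case
    subst huw
    have hinj : Function.Injective q := by
      intro a b hab
      rcases (mk_eq_mk he a b).mp hab with h | ⟨rfl, rfl⟩ | ⟨rfl, rfl⟩
      · exact h
      · rfl
      · rfl
    have hbij : Function.Bijective q := ⟨hinj, hsurj⟩
    have hx : ∀ x a : G.V, q x = q a ↔ x = a := fun x a =>
      ⟨fun h => hinj h, fun h => h ▸ rfl⟩
    -- deg formula
    have hdeg : ∀ x : G.V, (G.contract e).deg (q x) + t x (G.ends e) = G.deg x := by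
      intro x
      rw [deg_contract, deg_eq_sum_t]
      have : ∀ e' ∈ Finset.univ.erase e,
          t (q x) (Sym2.map q (G.ends e')) = t x (G.ends e') := fun e' _ =>
        t_map_eq x (hx x) (G.ends e')
      rw [Finset.sum_congr rfl this]
      exact Finset.sum_erase_add _ _ (Finset.mem_univ e)
    -- cardinality of vertices
    have hV : (Nat.card (G.contract e).V : ℤ) = (Nat.card G.V : ℤ) := by
      exact_mod_cast Nat.card_congr (Equiv.ofBijective q hbij).symm
    -- v₁ bound
    have hv1 : (G.contract e).v₁ ≤ G.v₁ + 1 := by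
      have hcong : (G.contract e).v₁ = Nat.card {x : G.V // (G.contract e).deg (q x) = 1} := by
        refine Nat.card_congr ?_
        exact ((Equiv.ofBijective q hbij).subtypeEquiv (fun a => by rfl)).symm
      rw [hcong, Multigraph.v₁, Nat.card_eq_fintype_card, Nat.card_eq_fintype_card,
        Fintype.card_subtype, Fintype.card_subtype]
      have hsub : Finset.univ.filter (fun x : G.V => (G.contract e).deg (q x) = 1) ⊆
          Finset.univ.filter (fun x : G.V => G.deg x = 1) ∪ {u} := by
        intro x hxmem
        simp only [Finset.mem_filter, Finset.mem_univ, true_and] at hxmem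
        by_cases hxu : x = u
        · simp [hxu]
        · have ht : t x (G.ends e) = 0 := t_ends_other he hxu hxu
          have := hdeg x
          rw [ht] at this
          simp only [Finset.mem_union, Finset.mem_filter, Finset.mem_univ, true_and]
          left; omega
      calc (Finset.univ.filter (fun x : G.V => (G.contract e).deg (q x) = 1)).card
          ≤ (Finset.univ.filter (fun x : G.V => G.deg x = 1) ∪ {u}).card :=
            Finset.card_le_card hsub
        _ ≤ (Finset.univ.filter (fun x : G.V => G.deg x = 1)).card + 1 := by
            simpa using Finset.card_union_le (Finset.univ.filter (fun x : G.V => G.deg x = 1)) {u}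
    unfold Multigraph.b₁
    rw [hE, hV]
    have : ((G.contract e).v₁ : ℤ) ≤ (G.v₁ : ℤ) + 1 := by exact_mod_cast hv1
    linarith
  · -- non-loop case
    have hquw : q u = q w := Quot.sound he
    -- vertex cardinality
    have hVequiv : {x : G.V // x ≠ w} ≃ Quot R := by
      refine Equiv.ofBijective (fun x => q x.1) ⟨?_, ?_⟩
      · rintro ⟨a, ha⟩ ⟨b, hb⟩ hab
        rcases (mk_eq_mk he a b).mp hab with h | ⟨rfl, rfl⟩ | ⟨rfl, rfl⟩
        · exact Subtype.ext h
        · exact absurd rfl hb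
        · exact absurd rfl ha
      · intro v
        obtain ⟨x, rfl⟩ := hsurj v
        by_cases hxw : x = w
        · exact ⟨⟨u, huw⟩, by rw [hxw] at *; exact hquw⟩
        · exact ⟨⟨x, hxw⟩, rfl⟩
    have hV : (Nat.card (G.contract e).V : ℤ) = (Nat.card G.V : ℤ) - 1 := by
      have h1 : Nat.card (G.contract e).V = Fintype.card {x : G.V // x ≠ w} :=
        (Nat.card_congr hVequiv.symm).trans Nat.card_eq_fintype_card
      have h2 : Fintype.card {x : G.V // x ≠ w} = Fintype.card G.V - 1 := by
        rw [Fintype.card_subtype, Finset.filter_ne']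
        exact Finset.card_erase_of_mem (Finset.mem_univ w)
      have h3 : 1 ≤ Fintype.card G.V := Fintype.card_pos_iff.mpr ⟨u⟩
      rw [h1, h2, Nat.card_eq_fintype_card]
      push_cast [h3]
      ring
    -- degrees
    have hdeg_other : ∀ x : G.V, x ≠ u → x ≠ w → (G.contract e).deg (q x) = G.deg x := by
      intro x hxu hxw
      have hx : ∀ a : G.V, q x = q a ↔ x = a := by
        intro a
        constructor
        · intro h
          rcases (mk_eq_mk he x a).mp h with h | ⟨rfl, rfl⟩ | ⟨rfl, rfl⟩
          · exact h
          · exact absurd rfl hxu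
          · exact absurd rfl hxw
        · rintro rfl; rfl
      rw [deg_contract, deg_eq_sum_t]
      have hc : ∀ e' ∈ Finset.univ.erase e,
          t (q x) (Sym2.map q (G.ends e')) = t x (G.ends e') := fun e' _ =>
        t_map_eq x hx (G.ends e')
      rw [Finset.sum_congr rfl hc]
      have h1 := Finset.sum_erase_add Finset.univ (fun e' => t x (G.ends e'))
        (Finset.mem_univ e)
      have ht : t x (G.ends e) = 0 := t_ends_other he hxu hxw
      omega
    have hdeg_merge : (G.contract e).deg (q u) + 2 = G.deg u + G.deg w := by
      rw [deg_contract, deg_eq_sum_t, deg_eq_sum_t]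
      have hc : ∀ e' ∈ Finset.univ.erase e,
          t (q u) (Sym2.map q (G.ends e')) = t u (G.ends e') + t w (G.ends e') :=
        fun e' _ => t_map_merge he huw (G.ends e')
      rw [Finset.sum_congr rfl hc, Finset.sum_add_distrib]
      have h1 := Finset.sum_erase_add Finset.univ (fun e' => t u (G.ends e'))
        (Finset.mem_univ e)
      have h2 := Finset.sum_erase_add Finset.univ (fun e' => t w (G.ends e'))
        (Finset.mem_univ e)
      have ht1 : t u (G.ends e) = 1 := t_ends_self he huw
      have ht2 : t w (G.ends e) = 1 := by
        have he' : G.ends e = s(w, u) := by rw [he, Sym2.eq_swap]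
        exact t_ends_self he' (Ne.symm huw)
      omega
    have hdegu : 1 ≤ G.deg u := by
      have h1 := Finset.single_le_sum (f := fun e' => t u (G.ends e'))
        (fun i _ => Nat.zero_le _) (Finset.mem_univ e)
      have ht1 : t u (G.ends e) = 1 := t_ends_self he huw
      rw [deg_eq_sum_t]
      omega
    have hdegw : 1 ≤ G.deg w := by
      have h1 := Finset.single_le_sum (f := fun e' => t w (G.ends e'))
        (fun i _ => Nat.zero_le _) (Finset.mem_univ e)
      have he' : G.ends e = s(w, u) := by rw [he, Sym2.eq_swap]
      have ht1 : t w (G.ends e) = 1 := t_ends_self he' (Ne.symm huw)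
      rw [deg_eq_sum_t]
      omega
    -- v₁ bound
    have hv1 : (G.contract e).v₁ ≤ G.v₁ := by
      rw [Multigraph.v₁, Multigraph.v₁, Nat.card_eq_fintype_card, Nat.card_eq_fintype_card,
        Fintype.card_subtype, Fintype.card_subtype]
      have hsub : Finset.univ.filter (fun v : (G.contract e).V => (G.contract e).deg v = 1) ⊆
          Finset.image q (Finset.univ.filter (fun x : G.V => G.deg x = 1)) := by
        intro v hv
        simp only [Finset.mem_filter, Finset.mem_univ, true_and] at hv
        obtain ⟨x, rfl⟩ := hsurj v
        by_cases hxu : x = u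
        · rw [hxu] at hv
          rw [hv] at hdeg_merge
          have : G.deg u = 1 ∨ G.deg w = 1 := by omega
          rcases this with h | h
          · exact Finset.mem_image.mpr ⟨u, by simp [h], by rw [hxu]⟩
          · exact Finset.mem_image.mpr ⟨w, by simp [h], by rw [hxu, ← hquw]⟩
        · by_cases hxw : x = w
          · rw [hxw, ← hquw] at hv
            rw [hv] at hdeg_merge
            have : G.deg u = 1 ∨ G.deg w = 1 := by omega
            rcases this with h | h
            · exact Finset.mem_image.mpr ⟨u, by simp [h], by rw [hxw, ← hquw]⟩
            · exact Finset.mem_image.mpr ⟨w, by simp [h], by rw [hxw]⟩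
          · rw [hdeg_other x hxu hxw] at hv
            exact Finset.mem_image.mpr ⟨x, by simp [hv], rfl⟩
      calc (Finset.univ.filter (fun v : (G.contract e).V => (G.contract e).deg v = 1)).card
          ≤ (Finset.image q (Finset.univ.filter (fun x : G.V => G.deg x = 1))).card :=
            Finset.card_le_card hsub
        _ ≤ (Finset.univ.filter (fun x : G.V => G.deg x = 1)).card :=
            Finset.card_image_le
    unfold Multigraph.b₁
    rw [hE, hV]
    have : ((G.contract e).v₁ : ℤ) ≤ (G.v₁ : ℤ) := by exact_mod_cast hv1
    linarith
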